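/- Let A_α, α = 1,…,p, be nonnegative operators on H, τ > 0, σ ≥ 1/2. Define S̃ = ∏_{α=1}^{p} (I + στA_α)⁻¹(I − (1−σ)τA_α) (product in any fixed order). Then ‖S̃‖ ≤ 1. -/

import Mathlib

open RealInnerProductSpace

lemma list_prod_norm_le_one {E : Type*} [NormedAddCommGroup E] [InnerProductSpace ℝ E]
    (l : List (E →L[ℝ] E)) (h : ∀ f ∈ l, ‖f‖ ≤ 1) : ‖l.prod‖ ≤ 1 := by
  induction l with
  | nil => have h1 : ‖(1 : E →L[ℝ] E)‖ ≤ 1 := ContinuousLinearMap.norm_id_le; simpa using h1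
  | cons a t ih =>
    rw [List.prod_cons]
    calc ‖a * t.prod‖ ≤ ‖a‖ * ‖t.prod‖ := norm_mul_le _ _
    _ ≤ 1 * 1 := by
        have h1 := h a List.mem_cons_self
        have h2 := ih (fun f hf => h f (List.mem_cons_of_mem a hf))
        exact mul_le_mul h1 h2 (norm_nonneg _) zero_le_one
    _ = 1 := one_mul 1

lemma factor_norm_le_one {E : Type*} [NormedAddCommGroup E] [InnerProductSpace ℝ E]
    [FiniteDimensional ℝ E] (B : E →L[ℝ] E) (hB : ∀ x : E, 0 ≤ ⟪B x, x⟫)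
    (τ σ : ℝ) (hτ : 0 < τ) (hσ : 1/2 ≤ σ) :
    ‖Ring.inverse (1 + (σ * τ) • B) * (1 - ((1 - σ) * τ) • B)‖ ≤ 1 := by
  set a : ℝ := σ * τ with ha
  set b : ℝ := (1 - σ) * τ with hb
  have ha0 : 0 ≤ a := mul_nonneg (by linarith) hτ.le
  set P : E →L[ℝ] E := 1 + a • B with hP
  set Q : E →L[ℝ] E := 1 - b • B with hQ
  -- pointwise norm inequality
  have key : ∀ z : E, ‖Q z‖ ≤ ‖P z‖ := by
    intro z
    have hsq : ‖Q z‖ ^ 2 ≤ ‖P z‖ ^ 2 := by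
      have hPz : P z = z + a • B z := by simp [hP]
      have hQz : Q z = z - b • B z := by simp [hQ]
      rw [hPz, hQz, norm_add_sq_real, norm_sub_sq_real]
      have h1 : ⟪z, a • B z⟫ = a * ⟪B z, z⟫ := by
        rw [real_inner_smul_right, real_inner_comm]
      have h2 : ⟪z, b • B z⟫ = b * ⟪B z, z⟫ := by
        rw [real_inner_smul_right, real_inner_comm]
      have h3 : ‖a • B z‖ ^ 2 = a ^ 2 * ‖B z‖ ^ 2 := by
        rw [norm_smul, mul_pow, Real.norm_eq_abs, sq_abs]
      have h4 : ‖b • B z‖ ^ 2 = b ^ 2 * ‖B z‖ ^ 2 := by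
        rw [norm_smul, mul_pow, Real.norm_eq_abs, sq_abs]
      rw [h1, h2, h3, h4]
      have hab : a + b = τ := by rw [ha, hb]; ring
      have hab2 : a ^ 2 - b ^ 2 = (2 * σ - 1) * τ * τ := by rw [ha, hb]; ring
      have hBz := hB z
      nlinarith [sq_nonneg ‖B z‖,
        mul_nonneg (mul_nonneg (by linarith : (0:ℝ) ≤ 2 * σ - 1) hτ.le) hτ.le]
    nlinarith [norm_nonneg (P z), norm_nonneg (Q z)]
  -- P is a unit
  have hPinj : Function.Injective P := by
    intro x y hxy
    have h0 : P (x - y) = 0 := by rw [map_sub, hxy, sub_self]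
    have hPi : ⟪P (x - y), x - y⟫ = ‖x - y‖ ^ 2 + a * ⟪B (x - y), x - y⟫ := by
      simp [hP, ContinuousLinearMap.add_apply, inner_add_left, real_inner_smul_left,
        real_inner_self_eq_norm_sq]
    rw [h0] at hPi
    simp only [inner_zero_left] at hPi
    have hnn := mul_nonneg ha0 (hB (x - y))
    have : ‖x - y‖ ^ 2 ≤ 0 := by linarith
    have hn0 : ‖x - y‖ = 0 := by nlinarith [sq_nonneg ‖x - y‖, norm_nonneg (x - y)]
    exact sub_eq_zero.mp (norm_eq_zero.mp hn0)
  have hPsurj : Function.Surjective P :=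
    LinearMap.injective_iff_surjective.mp hPinj
  have hU : IsUnit P := ContinuousLinearMap.isUnit_iff_bijective.mpr ⟨hPinj, hPsurj⟩
  obtain ⟨u, hu⟩ := hU
  -- commutation
  have hcomm : Commute Q P := by
    show Q * P = P * Q
    ext x
    simp only [hP, hQ, ContinuousLinearMap.mul_apply, ContinuousLinearMap.add_apply,
      ContinuousLinearMap.sub_apply, ContinuousLinearMap.one_apply,
      ContinuousLinearMap.coe_smul', Pi.smul_apply, map_add, map_sub, map_smul]
    module
  have hcQu : Commute Q (↑u⁻¹ : E →L[ℝ] E) := by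
    have : Commute Q (↑u : E →L[ℝ] E) := by rw [hu]; exact hcomm
    exact this.units_inv_right
  have hinv : Ring.inverse P = (↑u⁻¹ : E →L[ℝ] E) := by
    rw [← hu, Ring.inverse_unit]
  rw [hinv]
  apply ContinuousLinearMap.opNorm_le_bound _ zero_le_one
  intro y
  rw [one_mul]
  have hmul : ((↑u⁻¹ : E →L[ℝ] E) * Q) y = Q ((↑u⁻¹ : E →L[ℝ] E) y) := by
    rw [← hcQu.eq]; rfl
  rw [hmul]
  calc ‖Q ((↑u⁻¹ : E →L[ℝ] E) y)‖ ≤ ‖P ((↑u⁻¹ : E →L[ℝ] E) y)‖ := key _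
  _ = ‖y‖ := by
      rw [← hu]
      rw [← ContinuousLinearMap.mul_apply, u.mul_inv]
      rfl

theorem stmt13 {E : Type*} [NormedAddCommGroup E] [InnerProductSpace ℝ E]
    [FiniteDimensional ℝ E]
    (p : ℕ) (hp : 1 ≤ p) (A : Fin p → (E →L[ℝ] E))
    (hA : ∀ α, ∀ x : E, 0 ≤ ⟪A α x, x⟫)
    (τ σ : ℝ) (hτ : 0 < τ) (hσ : 1/2 ≤ σ) :
    ‖(List.ofFn fun α : Fin p =>
        Ring.inverse (1 + (σ * τ) • A α) * (1 - ((1 - σ) * τ) • A α)).prod‖ ≤ 1 := by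
  apply list_prod_norm_le_one
  intro f hf
  rw [List.mem_ofFn] at hf
  obtain ⟨α, rfl⟩ := hf
  exact factor_norm_le_one (A α) (hA α) τ σ hτ hσ
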